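/- arXiv:2211.04408 — 3 statements merged into one kernel-verified Lean document; each statement's English description precedes it below -/
import Mathlib

section
/- Let C ≥ c > 0 be constants, let n ≥ 1, and let L be an integer with L ≥ 2. Let 𝓛 ⊂ ℝⁿ be a set of exactly L points with ‖x‖ ≤ √(nC) for every x ∈ 𝓛 and ‖x − x′‖ ≥ √(nc) for all distinct x, x′ ∈ 𝓛. Let O ∈ ℝⁿ and r > 0 be such that max_{x∈𝓛} ‖x − O‖ = r and r² = rad²(𝓛) (O is the center of the smallest enclosing ball of 𝓛), and let x₀ ∈ 𝓛 satisfy ‖x₀ − O‖ = r. Set α := arcsin( √(nc)/(2r) ) (note that √(nc)/2 ≤ r, so α is well defined). Then every point y lying in the affine span of 𝓛 and satisfying ⟨ y − O , O − x₀ ⟩ ≥ cos(α)·‖y − O‖·‖O − x₀‖ (i.e., y lies in the cone with apex O, axis pointing from x₀ through O, and angular radius α) satisfies ‖y − x‖ ≤ ‖y − x₀‖ for every x ∈ 𝓛; that is, x₀ is a farthest point of 𝓛 from y. -/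
open MeasureTheory

set_option maxHeartbeats 1000000

private lemma key_ineq {E : Type*} [NormedAddCommGroup E] [InnerProductSpace ℝ E]
    (u b v : E) (t : ℝ) (ht0 : 0 ≤ t) (ht1 : t ≤ 1) (hnb : 0 < ‖b‖)
    (hP : (inner ℝ u b : ℝ) ≤ -(Real.sqrt (1 - t ^ 2) * (‖u‖ * ‖b‖)))
    (hQ : t * (‖b‖ * ‖v‖) ≤ (inner ℝ v b : ℝ)) :
    (inner ℝ u v : ℝ) ≤ 0 := by
  set P : ℝ := inner ℝ u b with hPdef
  set Q : ℝ := inner ℝ v b with hQdef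
  have hPc : (inner ℝ b u : ℝ) = P := (real_inner_comm b u).symm
  have hQc : (inner ℝ b v : ℝ) = Q := (real_inner_comm b v).symm
  have hs0 : 0 ≤ 1 - t ^ 2 := by nlinarith
  have hs : Real.sqrt (1 - t ^ 2) ^ 2 = 1 - t ^ 2 := Real.sq_sqrt hs0
  have hsnn : 0 ≤ Real.sqrt (1 - t ^ 2) := Real.sqrt_nonneg _
  set u' : E := (‖b‖ ^ 2) • u - P • b with hu'def
  set v' : E := (‖b‖ ^ 2) • v - Q • b with hv'def
  have hu'v' : (inner ℝ u' v' : ℝ) = ‖b‖ ^ 2 * (‖b‖ ^ 2 * inner ℝ u v - P * Q) := by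
    simp only [hu'def, hv'def, inner_sub_left, inner_sub_right, real_inner_smul_left,
      real_inner_smul_right]
    simp only [real_inner_self_eq_norm_sq, ← hPdef, ← hQdef, hPc, hQc]
    ring
  have hu'n : ‖u'‖ ^ 2 = ‖b‖ ^ 2 * (‖u‖ ^ 2 * ‖b‖ ^ 2 - P ^ 2) := by
    rw [← real_inner_self_eq_norm_sq]
    simp only [hu'def, inner_sub_left, inner_sub_right, real_inner_smul_left,
      real_inner_smul_right]
    simp only [real_inner_self_eq_norm_sq, ← hPdef, hPc]
    ring
  have hv'n : ‖v'‖ ^ 2 = ‖b‖ ^ 2 * (‖v‖ ^ 2 * ‖b‖ ^ 2 - Q ^ 2) := by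
    rw [← real_inner_self_eq_norm_sq]
    simp only [hv'def, inner_sub_left, inner_sub_right, real_inner_smul_left,
      real_inner_smul_right]
    simp only [real_inner_self_eq_norm_sq, ← hQdef, hQc]
    ring
  set A : ℝ := Real.sqrt (1 - t ^ 2) * (‖u‖ * ‖b‖) with hAdef
  set B : ℝ := t * (‖b‖ * ‖v‖) with hBdef
  have hA0 : 0 ≤ A := by positivity
  have hB0 : 0 ≤ B := by positivity
  have hA2 : A ^ 2 = (1 - t ^ 2) * (‖u‖ ^ 2 * ‖b‖ ^ 2) := by
    rw [hAdef, mul_pow, hs]; ring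
  have hB2 : B ^ 2 = t ^ 2 * (‖b‖ ^ 2 * ‖v‖ ^ 2) := by rw [hBdef]; ring
  have hP2 : (1 - t ^ 2) * (‖u‖ ^ 2 * ‖b‖ ^ 2) ≤ P ^ 2 := by
    have hprod : 0 ≤ (-A - P) * (A - P) := by
      apply mul_nonneg <;> linarith
    nlinarith [hprod, hA2]
  have hQ2 : t ^ 2 * (‖b‖ ^ 2 * ‖v‖ ^ 2) ≤ Q ^ 2 := by
    have hprod : 0 ≤ (Q - B) * (Q + B) := by
      apply mul_nonneg <;> linarith
    nlinarith [hprod, hB2]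
  have hbu : ‖u'‖ ≤ t * ‖u‖ * ‖b‖ ^ 2 := by
    have hmul : ‖b‖ ^ 2 * ((1 - t ^ 2) * (‖u‖ ^ 2 * ‖b‖ ^ 2)) ≤ ‖b‖ ^ 2 * P ^ 2 :=
      mul_le_mul_of_nonneg_left hP2 (sq_nonneg _)
    have h1 : ‖u'‖ ^ 2 ≤ (t * ‖u‖ * ‖b‖ ^ 2) ^ 2 := by nlinarith [hmul]
    have h2 := Real.sqrt_le_sqrt h1
    rwa [Real.sqrt_sq (norm_nonneg _), Real.sqrt_sq (by positivity)] at h2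
  have hbv : ‖v'‖ ≤ Real.sqrt (1 - t ^ 2) * ‖v‖ * ‖b‖ ^ 2 := by
    have hmul : ‖b‖ ^ 2 * (t ^ 2 * (‖b‖ ^ 2 * ‖v‖ ^ 2)) ≤ ‖b‖ ^ 2 * Q ^ 2 :=
      mul_le_mul_of_nonneg_left hQ2 (sq_nonneg _)
    have hrhs : (Real.sqrt (1 - t ^ 2) * ‖v‖ * ‖b‖ ^ 2) ^ 2
        = (1 - t ^ 2) * (‖v‖ ^ 2 * (‖b‖ ^ 2 * ‖b‖ ^ 2)) := by
      rw [mul_pow, mul_pow, hs]; ring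
    have h1 : ‖v'‖ ^ 2 ≤ (Real.sqrt (1 - t ^ 2) * ‖v‖ * ‖b‖ ^ 2) ^ 2 := by
      nlinarith [hmul, hrhs]
    have h2 := Real.sqrt_le_sqrt h1
    rwa [Real.sqrt_sq (norm_nonneg _), Real.sqrt_sq (by positivity)] at h2
  have hcs : (inner ℝ u' v' : ℝ) ≤ ‖u'‖ * ‖v'‖ := real_inner_le_norm u' v'
  have hPneg : P ≤ 0 := le_trans hP (by linarith)
  have hPQ : A * B ≤ (-P) * Q := by
    apply mul_le_mul (by linarith) (by linarith) hB0 (by linarith)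
  have hfin : ‖b‖ ^ 2 * (‖b‖ ^ 2 * (inner ℝ u v : ℝ) - P * Q) ≤ ‖b‖ ^ 2 * ((-P) * Q) := by
    calc ‖b‖ ^ 2 * (‖b‖ ^ 2 * (inner ℝ u v : ℝ) - P * Q) = inner ℝ u' v' := hu'v'.symm
      _ ≤ ‖u'‖ * ‖v'‖ := hcs
      _ ≤ (t * ‖u‖ * ‖b‖ ^ 2) * (Real.sqrt (1 - t ^ 2) * ‖v‖ * ‖b‖ ^ 2) :=
          mul_le_mul hbu hbv (norm_nonneg v') (by positivity)
      _ = ‖b‖ ^ 2 * (A * B) := by rw [hAdef, hBdef]; ring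
      _ ≤ ‖b‖ ^ 2 * ((-P) * Q) := mul_le_mul_of_nonneg_left hPQ (sq_nonneg _)
  by_contra hcon
  push_neg at hcon
  have hpos : 0 < ‖b‖ ^ 2 * ‖b‖ ^ 2 * (inner ℝ u v : ℝ) := by positivity
  nlinarith [hfin]


/-- Squared Chebyshev radius of a finite set of points in `ℝⁿ`:
`rad²(𝓛) = inf_y max_{x ∈ 𝓛} ‖x − y‖²`. -/
noncomputable def radSq {n : ℕ} (𝓛 : Finset (EuclideanSpace ℝ (Fin n))) : ℝ :=
  ⨅ y : EuclideanSpace ℝ (Fin n),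
    sSup ((fun x => ‖x - y‖ ^ 2) '' (𝓛 : Set (EuclideanSpace ℝ (Fin n))))

/-- The cone-in-Voronoi lemma: every point `y` of the affine span of `𝓛` lying in the cone
with apex `O` (center of the smallest enclosing ball of `𝓛`), axis from `x₀` through `O`,
and angular radius `α = arcsin(√(nc)/(2r))` has `x₀` as a farthest point of `𝓛`. -/
theorem stmt5 (Cbig c : ℝ) (hc : 0 < c) (hcC : c ≤ Cbig) (n : ℕ) (hn : 1 ≤ n)
    (L : ℕ) (hL : 2 ≤ L) (𝓛 : Finset (EuclideanSpace ℝ (Fin n))) (hcard : 𝓛.card = L)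
    (hnorm : ∀ x ∈ 𝓛, ‖x‖ ≤ Real.sqrt (n * Cbig))
    (hdist : ∀ x ∈ 𝓛, ∀ x' ∈ 𝓛, x ≠ x' → Real.sqrt (n * c) ≤ ‖x - x'‖)
    (O : EuclideanSpace ℝ (Fin n)) (r : ℝ) (hr : 0 < r)
    (hmax : ∀ x ∈ 𝓛, ‖x - O‖ ≤ r) (hrad : r ^ 2 = radSq 𝓛)
    (x₀ : EuclideanSpace ℝ (Fin n)) (hx₀ : x₀ ∈ 𝓛) (hx₀r : ‖x₀ - O‖ = r)
    (y : EuclideanSpace ℝ (Fin n))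
    (hy : y ∈ affineSpan ℝ (𝓛 : Set (EuclideanSpace ℝ (Fin n))))
    (hcone : Real.cos (Real.arcsin (Real.sqrt (n * c) / (2 * r))) * (‖y - O‖ * ‖O - x₀‖)
      ≤ (inner ℝ (y - O) (O - x₀) : ℝ)) :
    ∀ x ∈ 𝓛, ‖y - x‖ ≤ ‖y - x₀‖ := by
  intro x hx
  by_cases hxx : x = x₀
  · subst hxx; exact le_refl _
  -- notation
  set t : ℝ := Real.sqrt (n * c) / (2 * r) with htdef
  have hsqnn : 0 ≤ Real.sqrt (n * c) := Real.sqrt_nonneg _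
  have ht0 : 0 ≤ t := by positivity
  have hvd : Real.sqrt (n * c) ≤ ‖x - x₀‖ := hdist x hx x₀ hx₀ hxx
  have hxsplit : x - x₀ = (x - O) - (x₀ - O) := by abel
  have h2r : ‖x - x₀‖ ≤ 2 * r := by
    rw [hxsplit]
    calc ‖(x - O) - (x₀ - O)‖ ≤ ‖x - O‖ + ‖x₀ - O‖ := norm_sub_le _ _
      _ ≤ 2 * r := by rw [hx₀r]; linarith [hmax x hx]
  have ht1 : t ≤ 1 := by
    rw [htdef, div_le_one (by linarith)]
    linarith
  have hbnorm : ‖x₀ - O‖ = r := hx₀r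
  have hbpos : 0 < ‖x₀ - O‖ := by rw [hbnorm]; exact hr
  -- the P-bound from the cone condition
  have hP : (inner ℝ (y - O) (x₀ - O) : ℝ)
      ≤ -(Real.sqrt (1 - t ^ 2) * (‖y - O‖ * ‖x₀ - O‖)) := by
    have hOx : O - x₀ = -(x₀ - O) := by abel
    have h1 : (inner ℝ (y - O) (O - x₀) : ℝ) = -(inner ℝ (y - O) (x₀ - O) : ℝ) := by
      rw [hOx, inner_neg_right]
    have h2 : ‖O - x₀‖ = ‖x₀ - O‖ := norm_sub_rev _ _
    have h3 := hcone
    rw [Real.cos_arcsin, h1, h2] at h3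
    linarith
  -- the Q-bound from the separation
  have hQ : t * (‖x₀ - O‖ * ‖x₀ - x‖) ≤ (inner ℝ (x₀ - x) (x₀ - O) : ℝ) := by
    have hvsplit : x₀ - x = (x₀ - O) - (x - O) := by abel
    have hinner : (inner ℝ (x₀ - x) (x₀ - O) : ℝ)
        = ‖x₀ - O‖ ^ 2 - inner ℝ (x - O) (x₀ - O) := by
      rw [hvsplit, inner_sub_left, real_inner_self_eq_norm_sq]
    have hnormsq : ‖x₀ - x‖ ^ 2
        = ‖x₀ - O‖ ^ 2 - 2 * inner ℝ (x₀ - O) (x - O) + ‖x - O‖ ^ 2 := by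
      rw [hvsplit]; exact norm_sub_sq_real _ _
    have hcomm : (inner ℝ (x₀ - O) (x - O) : ℝ) = inner ℝ (x - O) (x₀ - O) :=
      real_inner_comm _ _
    have h2rt : 2 * r * t = Real.sqrt (n * c) := by
      rw [htdef, mul_comm]; exact div_mul_cancel₀ _ (by positivity)
    have hV : 2 * r * t ≤ ‖x₀ - x‖ := by
      rw [h2rt, norm_sub_rev]; exact hvd
    have hVnn : 0 ≤ ‖x₀ - x‖ := norm_nonneg _
    have ha : ‖x - O‖ ≤ r := hmax x hx
    have hann : 0 ≤ ‖x - O‖ := norm_nonneg _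
    rw [hinner, hbnorm]
    rw [hcomm] at hnormsq
    rw [hbnorm] at hnormsq
    nlinarith [mul_nonneg (by linarith : (0:ℝ) ≤ ‖x₀ - x‖ - 2 * r * t) hVnn,
      mul_nonneg (by linarith : (0:ℝ) ≤ r - ‖x - O‖) (by linarith : (0:ℝ) ≤ r + ‖x - O‖)]
  have hkey : (inner ℝ (y - O) (x₀ - x) : ℝ) ≤ 0 :=
    key_ineq (y - O) (x₀ - O) (x₀ - x) t ht0 ht1 hbpos hP hQ
  -- conclude
  have hysplit : y - x = (y - O) - (x - O) := by abel
  have hysplit₀ : y - x₀ = (y - O) - (x₀ - O) := by abel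
  have e1 : ‖y - x‖ ^ 2
      = ‖y - O‖ ^ 2 - 2 * inner ℝ (y - O) (x - O) + ‖x - O‖ ^ 2 := by
    rw [hysplit]; exact norm_sub_sq_real _ _
  have e2 : ‖y - x₀‖ ^ 2
      = ‖y - O‖ ^ 2 - 2 * inner ℝ (y - O) (x₀ - O) + ‖x₀ - O‖ ^ 2 := by
    rw [hysplit₀]; exact norm_sub_sq_real _ _
  have e3 : (inner ℝ (y - O) (x₀ - x) : ℝ)
      = inner ℝ (y - O) (x₀ - O) - inner ℝ (y - O) (x - O) := by
    have : x₀ - x = (x₀ - O) - (x - O) := by abel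
    rw [this, inner_sub_right]
  have ha : ‖x - O‖ ≤ r := hmax x hx
  have hsq : ‖y - x‖ ^ 2 ≤ ‖y - x₀‖ ^ 2 := by
    rw [e1, e2, hbnorm]
    have hann : 0 ≤ ‖x - O‖ := norm_nonneg _
    nlinarith [hkey, e3, mul_nonneg (by linarith : (0:ℝ) ≤ r - ‖x - O‖)
      (by linarith : (0:ℝ) ≤ r + ‖x - O‖)]
  have := Real.sqrt_le_sqrt hsq
  rwa [Real.sqrt_sq (norm_nonneg _), Real.sqrt_sq (norm_nonneg _)] at this
end

section
/- Let n ≥ 2, let L be an integer with L ≥ 2, and set a := n². Let C_a be a finite subset of the cube [−a/2, a/2]ⁿ ⊂ ℝⁿ with |C_a| ≥ L, and let C := { x + a·(1 + n^{−1.4})·z : x ∈ C_a, z ∈ ℤⁿ }. If min_{𝓛} rad²(𝓛) ≤ n^{1.2}/4, where the minimum ranges over all L-element subsets 𝓛 of C_a, then inf_{𝓛′} rad²(𝓛′) = min_{𝓛} rad²(𝓛), where the infimum ranges over all L-element subsets 𝓛′ of C. -/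
open MeasureTheory

lemma abs_coord_le_norm {n : ℕ} (v : EuclideanSpace ℝ (Fin n)) (i : Fin n) : |v i| ≤ ‖v‖ := by
  rw [EuclideanSpace.norm_eq]
  have h1 : |v i| = Real.sqrt (‖v i‖ ^ 2) := by
    rw [Real.sqrt_sq_eq_abs, Real.norm_eq_abs, abs_abs]
  rw [h1]
  apply Real.sqrt_le_sqrt
  exact Finset.single_le_sum (f := fun j => ‖v j‖ ^ 2) (fun j _ => sq_nonneg _)
    (Finset.mem_univ i)

lemma radSq_nonneg {n : ℕ} {S : Finset (EuclideanSpace ℝ (Fin n))} (hS : S.Nonempty) :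
    0 ≤ radSq S := by
  apply le_ciInf
  intro y
  obtain ⟨x, hx⟩ := hS
  have hmem : ‖x - y‖ ^ 2 ∈ (fun x => ‖x - y‖ ^ 2) '' (S : Set (EuclideanSpace ℝ (Fin n))) :=
    ⟨x, by simpa using hx, rfl⟩
  exact le_trans (sq_nonneg _) (le_csSup ((S.finite_toSet.image _).bddAbove) hmem)

lemma radSq_ge {n : ℕ} {S : Finset (EuclideanSpace ℝ (Fin n))} {p q : EuclideanSpace ℝ (Fin n)}
    (hp : p ∈ S) (hq : q ∈ S) : (‖p - q‖ / 2) ^ 2 ≤ radSq S := by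
  apply le_ciInf
  intro y
  have bdd := (S.finite_toSet.image (fun x => ‖x - y‖ ^ 2)).bddAbove
  have h1 : ‖p - y‖ ^ 2 ≤ sSup ((fun x => ‖x - y‖ ^ 2) '' (S : Set (EuclideanSpace ℝ (Fin n)))) :=
    le_csSup bdd ⟨p, by simpa using hp, rfl⟩
  have h2 : ‖q - y‖ ^ 2 ≤ sSup ((fun x => ‖x - y‖ ^ 2) '' (S : Set (EuclideanSpace ℝ (Fin n)))) :=
    le_csSup bdd ⟨q, by simpa using hq, rfl⟩
  have htri : ‖p - q‖ ≤ ‖p - y‖ + ‖q - y‖ := by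
    have := norm_sub_le_norm_sub_add_norm_sub p y q
    calc ‖p - q‖ ≤ ‖p - y‖ + ‖y - q‖ := by
          simpa [dist_eq_norm] using dist_triangle p y q
      _ = ‖p - y‖ + ‖q - y‖ := by rw [norm_sub_rev y q]
  nlinarith [norm_nonneg (p - y), norm_nonneg (q - y), norm_nonneg (p - q), sq_nonneg (‖p - y‖ - ‖q - y‖)]

open scoped Classical in
lemma radSq_image_add {n : ℕ} (S : Finset (EuclideanSpace ℝ (Fin n)))
    (v : EuclideanSpace ℝ (Fin n)) :
    radSq (S.image (fun x => x + v)) = radSq S := by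
  unfold radSq
  have key : ∀ y : EuclideanSpace ℝ (Fin n),
      sSup ((fun x => ‖x - y‖ ^ 2) '' ((S.image (fun x => x + v)) : Set (EuclideanSpace ℝ (Fin n))))
      = sSup ((fun x => ‖x - (y - v)‖ ^ 2) '' (S : Set (EuclideanSpace ℝ (Fin n)))) := by
    intro y
    congr 1
    rw [Finset.coe_image, Set.image_image]
    apply Set.image_congr
    intro x _
    have : x + v - y = x - (y - v) := by abel
    rw [this]
  simp_rw [key]
  rw [iInf, iInf]
  congr 1
  exact (Equiv.subRight v).surjective.range_comp
    (fun y => sSup ((fun x => ‖x - y‖ ^ 2) '' (S : Set (EuclideanSpace ℝ (Fin n)))))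

/-- Tiling a finite codebook `C_a ⊆ [−a/2,a/2]ⁿ` (with `a = n²`) along the scaled integer
lattice `a(1+n^{−1.4})·ℤⁿ` preserves the minimal squared Chebyshev radius over `L`-lists,
provided the latter is at most `n^{1.2}/4`. -/
theorem stmt16 (n : ℕ) (hn : 2 ≤ n) (L : ℕ) (hL : 2 ≤ L)
    (Ca : Finset (EuclideanSpace ℝ (Fin n)))
    (hCa : ∀ x ∈ Ca, ∀ i : Fin n, |x i| ≤ (n : ℝ) ^ 2 / 2)
    (hcard : L ≤ Ca.card)
    (hmin : sInf {r : ℝ | ∃ 𝓛 : Finset (EuclideanSpace ℝ (Fin n)),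
        𝓛 ⊆ Ca ∧ 𝓛.card = L ∧ radSq 𝓛 = r} ≤ (n : ℝ) ^ ((1.2 : ℝ)) / 4) :
    sInf {r : ℝ | ∃ 𝓛 : Finset (EuclideanSpace ℝ (Fin n)),
        (↑𝓛 : Set (EuclideanSpace ℝ (Fin n))) ⊆
          {p | ∃ x ∈ Ca, ∃ z : Fin n → ℤ,
            p = x + ((n : ℝ) ^ 2 * (1 + (n : ℝ) ^ (-(1.4 : ℝ)))) •
              ((WithLp.equiv 2 (Fin n → ℝ)).symm fun i => (z i : ℝ))} ∧
        𝓛.card = L ∧ radSq 𝓛 = r}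
      = sInf {r : ℝ | ∃ 𝓛 : Finset (EuclideanSpace ℝ (Fin n)),
          𝓛 ⊆ Ca ∧ 𝓛.card = L ∧ radSq 𝓛 = r} := by
  classical
  have hn0 : (0:ℝ) < (n:ℝ) := by positivity
  set s : ℝ := (n : ℝ) ^ 2 * (1 + (n : ℝ) ^ (-(1.4 : ℝ))) with hs_def
  set B := {r : ℝ | ∃ 𝓛 : Finset (EuclideanSpace ℝ (Fin n)),
          𝓛 ⊆ Ca ∧ 𝓛.card = L ∧ radSq 𝓛 = r} with hB_def
  set A := {r : ℝ | ∃ 𝓛 : Finset (EuclideanSpace ℝ (Fin n)),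
        (↑𝓛 : Set (EuclideanSpace ℝ (Fin n))) ⊆
          {p | ∃ x ∈ Ca, ∃ z : Fin n → ℤ,
            p = x + s •
              ((WithLp.equiv 2 (Fin n → ℝ)).symm fun i => (z i : ℝ))} ∧
        𝓛.card = L ∧ radSq 𝓛 = r} with hA_def
  -- B nonempty
  obtain ⟨T, hTsub, hTcard⟩ := Finset.exists_subset_card_eq hcard
  have hBne : B.Nonempty := ⟨radSq T, T, hTsub, hTcard, rfl⟩
  -- lower bounds
  have hAlb : ∀ r ∈ A, (0:ℝ) ≤ r := by
    rintro r ⟨𝓛, -, hc, rfl⟩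
    exact radSq_nonneg (Finset.card_pos.mp (by omega))
  have hBlb : ∀ r ∈ B, (0:ℝ) ≤ r := by
    rintro r ⟨𝓛, -, hc, rfl⟩
    exact radSq_nonneg (Finset.card_pos.mp (by omega))
  have hAbdd : BddBelow A := ⟨0, hAlb⟩
  have hBbdd : BddBelow B := ⟨0, hBlb⟩
  -- B ⊆ A
  have hBA : B ⊆ A := by
    rintro r ⟨𝓛, hsub, hc, rfl⟩
    refine ⟨𝓛, ?_, hc, rfl⟩
    intro p hp
    refine ⟨p, hsub hp, 0, ?_⟩
    have h0 : ((WithLp.equiv 2 (Fin n → ℝ)).symm fun i => (((0: Fin n → ℤ) i : ℝ))) = 0 := by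
      ext i; simp
    rw [h0, smul_zero, add_zero]
  have hAne : A.Nonempty := hBne.mono hBA
  apply le_antisymm
  · exact csInf_le_csInf hAbdd hBne hBA
  · -- sInf B ≤ every element of A
    apply le_csInf hAne
    rintro r ⟨𝓛, hsub, hc, rfl⟩
    have h𝓛ne : 𝓛.Nonempty := Finset.card_pos.mp (by omega)
    choose x hxCa z hz using fun p (hp : p ∈ 𝓛) => hsub (Finset.mem_coe.mpr hp)
    by_cases hcase : ∀ p (hp : p ∈ 𝓛) q (hq : q ∈ 𝓛), z p hp = z q hq
    · -- all in one cell: translate back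
      obtain ⟨p₀, hp₀⟩ := h𝓛ne
      set v : EuclideanSpace ℝ (Fin n) :=
        s • ((WithLp.equiv 2 (Fin n → ℝ)).symm fun i => ((z p₀ hp₀ i : ℝ))) with hv_def
      set S : Finset (EuclideanSpace ℝ (Fin n)) := 𝓛.image (fun p => p - v) with hS_def
      have hSsub : S ⊆ Ca := by
        intro q hq
        rw [hS_def, Finset.mem_image] at hq
        obtain ⟨p, hp, rfl⟩ := hq
        have : p = x p hp + v := by
          conv_lhs => rw [hz p hp]
          rw [hv_def, hcase p hp p₀ hp₀]
        rw [this, add_sub_cancel_right]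
        exact hxCa p hp
      have hScard : S.card = L := by
        rw [hS_def, Finset.card_image_of_injective _ (sub_left_injective), hc]
      have himg : S.image (fun x => x + v) = 𝓛 := by
        rw [hS_def, Finset.image_image]
        have : ((fun x => x + v) ∘ fun p => p - v) = id := by
          funext p; simp
        rw [this, Finset.image_id]
      have hrad : radSq S = radSq 𝓛 := by
        rw [← himg, radSq_image_add]
      exact csInf_le hBbdd ⟨S, hSsub, hScard, hrad⟩
    · -- two cells: radius is large
      push_neg at hcase
      obtain ⟨p, hp, q, hq, hne⟩ := hcase
      obtain ⟨i, hnei⟩ := Function.ne_iff.mp hne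
      have hdz : (1:ℝ) ≤ |(z p hp i : ℝ) - (z q hq i : ℝ)| := by
        rw [← Int.cast_sub, ← Int.cast_abs]
        exact_mod_cast Int.one_le_abs (sub_ne_zero.mpr hnei)
      -- coordinates
      have hpi : p i = x p hp i + s * (z p hp i : ℝ) := by
        conv_lhs => rw [hz p hp]
        simp [PiLp.add_apply, PiLp.smul_apply, WithLp.equiv_symm_apply, PiLp.toLp_apply, smul_eq_mul]
      have hqi : q i = x q hq i + s * (z q hq i : ℝ) := by
        conv_lhs => rw [hz q hq]
        simp [PiLp.add_apply, PiLp.smul_apply, WithLp.equiv_symm_apply, PiLp.toLp_apply, smul_eq_mul]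
      have hxb1 := hCa _ (hxCa p hp) i
      have hxb2 := hCa _ (hxCa q hq) i
      have heps : (0:ℝ) < (n : ℝ) ^ (-(1.4 : ℝ)) := Real.rpow_pos_of_pos hn0 _
      have hs1 : (n:ℝ)^2 ≤ s := by
        rw [hs_def]; nlinarith [sq_nonneg (n:ℝ)]
      -- lower bound on coordinate difference
      have hcoord : (n:ℝ)^2 * (n : ℝ) ^ (-(1.4 : ℝ)) ≤ |p i - q i| := by
        rw [hpi, hqi]
        have h1 : s * ((z p hp i : ℝ) - (z q hq i : ℝ)) =
            (x p hp i + s * (z p hp i : ℝ) - (x q hq i + s * (z q hq i : ℝ)))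
            - (x p hp i - x q hq i) := by ring
        have h2 : s ≤ |s * ((z p hp i : ℝ) - (z q hq i : ℝ))| := by
          rw [abs_mul]
          have hs0 : (0:ℝ) ≤ s := le_trans (by positivity) hs1
          calc s = s * 1 := by ring
            _ ≤ |s| * |(z p hp i : ℝ) - (z q hq i : ℝ)| := by
                rw [abs_of_nonneg hs0]
                exact mul_le_mul_of_nonneg_left hdz hs0
        have h3 : |x p hp i - x q hq i| ≤ (n:ℝ)^2 := by
          calc |x p hp i - x q hq i| ≤ |x p hp i| + |x q hq i| := abs_sub _ _
            _ ≤ (n:ℝ)^2/2 + (n:ℝ)^2/2 := add_le_add hxb1 hxb2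
            _ = (n:ℝ)^2 := by ring
        have h4 := abs_sub_abs_le_abs_sub
          (x p hp i + s * (z p hp i : ℝ) - (x q hq i + s * (z q hq i : ℝ)))
          (x p hp i - x q hq i)
        have h5 : |(x p hp i + s * (z p hp i : ℝ) - (x q hq i + s * (z q hq i : ℝ)))
            - (x p hp i - x q hq i)| = |s * ((z p hp i : ℝ) - (z q hq i : ℝ))| := by
          rw [← h1]
        -- |big| ≥ |s Δz| - |Δx| ≥ s - n²  = n² ε
        have h6 : |s * ((z p hp i : ℝ) - (z q hq i : ℝ))| - |x p hp i - x q hq i|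
            ≤ |x p hp i + s * (z p hp i : ℝ) - (x q hq i + s * (z q hq i : ℝ))| := by
          have := abs_sub_abs_le_abs_sub
            (s * ((z p hp i : ℝ) - (z q hq i : ℝ)))
            ((x q hq i - x p hp i))
          have heq : s * ((z p hp i : ℝ) - (z q hq i : ℝ)) - (x q hq i - x p hp i)
              = x p hp i + s * (z p hp i : ℝ) - (x q hq i + s * (z q hq i : ℝ)) := by ring
          rw [heq] at this
          have : |s * ((z p hp i : ℝ) - (z q hq i : ℝ))| - |x q hq i - x p hp i|
              ≤ |x p hp i + s * (z p hp i : ℝ) - (x q hq i + s * (z q hq i : ℝ))| := this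
          rw [abs_sub_comm (x q hq i)] at this
          linarith
        have : s - (n:ℝ)^2 = (n:ℝ)^2 * (n : ℝ) ^ (-(1.4 : ℝ)) := by
          rw [hs_def]; ring
        linarith
      have hnorm : (n:ℝ)^2 * (n : ℝ) ^ (-(1.4 : ℝ)) ≤ ‖p - q‖ := by
        refine le_trans hcoord (le_trans ?_ (abs_coord_le_norm (p - q) i))
        have : (p - q) i = p i - q i := rfl
        rw [this]
      -- conclude
      have hkey : ((n:ℝ)^2 * (n : ℝ) ^ (-(1.4 : ℝ)) / 2)^2 ≤ radSq 𝓛 := by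
        refine le_trans ?_ (radSq_ge hp hq)
        have h2 : (0:ℝ) ≤ (n:ℝ)^2 * (n : ℝ) ^ (-(1.4 : ℝ)) / 2 := by positivity
        have := pow_le_pow_left₀ h2 (div_le_div_of_nonneg_right hnorm (by norm_num) |>.trans_eq rfl) 2
        exact this
      have hval : ((n:ℝ)^2 * (n : ℝ) ^ (-(1.4 : ℝ)) / 2)^2 = (n : ℝ) ^ ((1.2 : ℝ)) / 4 := by
        have e1 : (n:ℝ)^2 * (n : ℝ) ^ (-(1.4 : ℝ)) = (n:ℝ) ^ ((0.6 : ℝ)) := by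
          rw [← Real.rpow_natCast (n:ℝ) 2, ← Real.rpow_add hn0]
          norm_num
        rw [e1, div_pow, ← Real.rpow_natCast ((n:ℝ) ^ ((0.6:ℝ))) 2, ← Real.rpow_mul hn0.le]
        norm_num
      rw [hval] at hkey
      exact le_trans hmin hkey
end

section
/- Let L be an integer with L ≥ 2 and let R ≥ 0. Then there exists exactly one t ∈ [1/L, 1] satisfying (L·t − 1)·e^{2R} = (L − 1)·t^{L/(L−1)}. -/
/-- For `L ≥ 2` and `R ≥ 0`, the equation `(Lt − 1)e^{2R} = (L−1)t^{L/(L−1)}` has exactly one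
solution `t ∈ [1/L, 1]`. -/
theorem stmt18 (L : ℕ) (hL : 2 ≤ L) (R : ℝ) (hR : 0 ≤ R) :
    ∃! t : ℝ, t ∈ Set.Icc (1 / (L : ℝ)) 1 ∧
      ((L : ℝ) * t - 1) * Real.exp (2 * R) = ((L : ℝ) - 1) * t ^ ((L : ℝ) / ((L : ℝ) - 1)) := by
  set c := Real.exp (2 * R) with hc
  have hL2 : (2:ℝ) ≤ (L:ℝ) := by exact_mod_cast hL
  have hL1 : (1:ℝ) ≤ (L:ℝ) - 1 := by linarith
  have hLpos : (0:ℝ) < L := by linarith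
  set α : ℝ := (L:ℝ) / ((L:ℝ) - 1) with hα
  have hα1 : 1 < α := by
    rw [hα, lt_div_iff₀ (by linarith)]
    linarith
  have hc1 : (1:ℝ) ≤ c := Real.one_le_exp (by linarith)
  set f : ℝ → ℝ := fun t => ((L:ℝ) * t - 1) * c - ((L:ℝ) - 1) * t ^ α with hf
  have hab : 1 / (L:ℝ) < 1 := by
    rw [div_lt_one hLpos]; linarith
  have hapos : 0 < 1 / (L:ℝ) := by positivity
  have hcont : ContinuousOn f (Set.Icc (1/(L:ℝ)) 1) := by
    apply Continuous.continuousOn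
    apply Continuous.sub (by continuity)
    apply Continuous.mul continuous_const
    rw [continuous_iff_continuousAt]
    intro x
    exact Real.continuousAt_rpow_const x α (Or.inr (by linarith))
  have hderiv : ∀ t ∈ Set.Ioo (1/(L:ℝ)) 1, HasDerivAt f ((L:ℝ) * (c - t ^ (α - 1))) t := by
    intro t ht
    have htpos : 0 < t := lt_trans hapos ht.1
    have h1 : HasDerivAt (fun t : ℝ => ((L:ℝ) * t - 1) * c) ((L:ℝ) * c) t := by
      have := (((hasDerivAt_id t).const_mul (L:ℝ)).sub_const 1).mul_const c
      simpa using this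
    have h2 : HasDerivAt (fun t : ℝ => ((L:ℝ) - 1) * t ^ α)
        (((L:ℝ) - 1) * (α * t ^ (α - 1))) t :=
      (Real.hasDerivAt_rpow_const (Or.inl htpos.ne')).const_mul _
    have h3 := h1.sub h2
    refine h3.congr_deriv ?_
    have : ((L:ℝ) - 1) * α = (L:ℝ) := by
      rw [hα]; field_simp
    rw [← mul_assoc, this]; ring
  have hmono : StrictMonoOn f (Set.Icc (1/(L:ℝ)) 1) := by
    apply strictMonoOn_of_deriv_pos (convex_Icc _ _) hcont
    intro t ht
    rw [interior_Icc] at ht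
    rw [(hderiv t ht).deriv]
    have htpos : 0 < t := lt_trans hapos ht.1
    have : t ^ (α - 1) < 1 := Real.rpow_lt_one htpos.le ht.2 (by linarith)
    have : 0 < c - t ^ (α - 1) := by linarith
    positivity
  have hfa : f (1/(L:ℝ)) < 0 := by
    have h0 : (L:ℝ) * (1/(L:ℝ)) - 1 = 0 := by field_simp; norm_num
    have hp : 0 < ((L:ℝ) - 1) * (1/(L:ℝ)) ^ α := by
      apply mul_pos (by linarith)
      exact Real.rpow_pos_of_pos hapos α
    simp only [hf, h0, zero_mul]
    linarith
  have hfb : 0 ≤ f 1 := by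
    simp only [hf, Real.one_rpow, mul_one]
    nlinarith
  have hiv : (0:ℝ) ∈ Set.Icc (f (1/(L:ℝ))) (f 1) := ⟨hfa.le, hfb⟩
  obtain ⟨x, hx, hfx⟩ := intermediate_value_Icc hab.le hcont hiv
  refine ⟨x, ⟨hx, ?_⟩, ?_⟩
  · have : f x = 0 := hfx
    simp only [hf] at this
    linarith
  · rintro y ⟨hy, hey⟩
    have hfy : f y = 0 := by simp only [hf]; linarith
    exact hmono.injOn hy hx (by rw [hfy, hfx])
end
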